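/- Let A be an n×n complex matrix, λ ∈ ℂ, and let w¹, …, w^m ∈ ℂⁿ be a Jordan chain of the adjoint: Aᴴ wⁱ = \overline{λ} wⁱ + w^{i+1} for 1 ≤ i < m, and Aᴴ w^m = \overline{λ} w^m. Define the generalized Koopman eigenfunctions φⁱ(x) = ⟨x, wⁱ⟩. Then for every t ∈ ℝ, every x ∈ ℂⁿ, and every 1 ≤ i ≤ m, ⟨exp(tA) x, wⁱ⟩ = e^{λ t} Σ_{n=0}^{m−i} (tⁿ/n!) ⟨x, w^{i+n}⟩; i.e., the generalized eigenfunctions evolve under the Koopman operator as U^t φⁱ = e^{λt} Σ_{n=0}^{m−i} (tⁿ/n!) φ^{i+n}. -/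

import Mathlib

open scoped BigOperators Matrix


lemma sum_mulVec_conj {n : ℕ} (M : Matrix (Fin n) (Fin n) ℂ) (v u : Fin n → ℂ) :
    ∑ k, M.mulVec v k * (starRingEnd ℂ) (u k)
      = ∑ j, v j * (starRingEnd ℂ) (M.conjTranspose.mulVec u j) := by
  simp only [Matrix.mulVec, dotProduct, Matrix.conjTranspose_apply, map_sum, map_mul,
    Complex.conj_conj, Finset.sum_mul, Finset.mul_sum]
  rw [Finset.sum_comm]
  apply Finset.sum_congr rfl
  intro j _
  apply Finset.sum_congr rfl
  intro k _
  simp only [starRingEnd_apply, star_star]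
  ring

lemma exp_smul_one_add {n : ℕ} (c : ℂ) (M : Matrix (Fin n) (Fin n) ℂ) :
    NormedSpace.exp (c • (1 : Matrix (Fin n) (Fin n) ℂ) + M)
      = Complex.exp c • NormedSpace.exp M := by
  letI : SeminormedRing (Matrix (Fin n) (Fin n) ℂ) := Matrix.linftyOpSemiNormedRing
  letI : NormedRing (Matrix (Fin n) (Fin n) ℂ) := Matrix.linftyOpNormedRing
  letI : NormedAlgebra ℂ (Matrix (Fin n) (Fin n) ℂ) := Matrix.linftyOpNormedAlgebra
  have hcomm : Commute (c • (1 : Matrix (Fin n) (Fin n) ℂ)) M := by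
    simp [Commute, SemiconjBy, Matrix.smul_mul, Matrix.mul_smul]
  rw [Matrix.exp_add_of_commute _ _ hcomm]
  have h1 : c • (1 : Matrix (Fin n) (Fin n) ℂ) = algebraMap ℂ _ c :=
    (Algebra.algebraMap_eq_smul_one c).symm
  erw [h1, ← NormedSpace.algebraMap_exp_comm, ← Complex.exp_eq_exp_ℂ, ← Algebra.smul_def]

lemma exp_mulVec {n : ℕ} (M : Matrix (Fin n) (Fin n) ℂ) (v : Fin n → ℂ) :
    (NormedSpace.exp M).mulVec v
      = ∑' k : ℕ, ((k.factorial : ℂ))⁻¹ • (M ^ k).mulVec v := by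
  letI : SeminormedRing (Matrix (Fin n) (Fin n) ℂ) := Matrix.linftyOpSemiNormedRing
  letI : NormedRing (Matrix (Fin n) (Fin n) ℂ) := Matrix.linftyOpNormedRing
  letI : NormedAlgebra ℂ (Matrix (Fin n) (Fin n) ℂ) := Matrix.linftyOpNormedAlgebra
  let L : Matrix (Fin n) (Fin n) ℂ →ₗ[ℂ] (Fin n → ℂ) :=
    { toFun := fun X => X.mulVec v
      map_add' := fun X Y => Matrix.add_mulVec X Y v
      map_smul' := fun c X => Matrix.smul_mulVec c X v }
  have hs : Summable (fun k : ℕ => ((k.factorial : ℂ))⁻¹ • M ^ k) :=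
    NormedSpace.expSeries_summable' M
  have := (L.toContinuousLinearMap).map_tsum hs
  rw [NormedSpace.exp_eq_tsum ℂ]
  simpa [L] using this

/-- Evolution of generalized Koopman eigenfunctions `φⁱ(x) = ⟨x, wⁱ⟩` built from a Jordan
chain `w¹, …, w^m` of the adjoint `Aᴴ` at `conj λ`:
`⟨exp(tA)x, wⁱ⟩ = e^{λt} Σ_{n=0}^{m-i} (tⁿ/n!) ⟨x, w^{i+n}⟩`. -/
theorem generalized_koopman_eigenfunction_evolution {n : ℕ}
    (A : Matrix (Fin n) (Fin n) ℂ) (lam : ℂ) (m : ℕ) (hm : 1 ≤ m)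
    (w : ℕ → Fin n → ℂ)
    (hchain : ∀ i, 1 ≤ i → i < m →
      A.conjTranspose.mulVec (w i) = (starRingEnd ℂ) lam • w i + w (i + 1))
    (hlast : A.conjTranspose.mulVec (w m) = (starRingEnd ℂ) lam • w m) :
    ∀ (t : ℝ) (x : Fin n → ℂ) (i : ℕ), 1 ≤ i → i ≤ m →
      ∑ k, (NormedSpace.exp ((t : ℂ) • A)).mulVec x k * (starRingEnd ℂ) (w i k)
        = Complex.exp (lam * t) *
            ∑ l ∈ Finset.range (m - i + 1),
              ((t : ℂ) ^ l / (l.factorial : ℂ)) *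
                ∑ k, x k * (starRingEnd ℂ) (w (i + l) k) := by
  intro t x i hi1 him
  set μ : ℂ := (starRingEnd ℂ) lam with hμ
  set N : Matrix (Fin n) (Fin n) ℂ := A.conjTranspose - μ • 1 with hNdef
  -- the extended chain
  set u : ℕ → Fin n → ℂ := fun l => if i + l ≤ m then w (i + l) else 0 with hu
  have hpow : ∀ l : ℕ, (N ^ l).mulVec (w i) = u l := by
    intro l
    induction l with
    | zero => simp [hu, him]
    | succ l ih =>
      rw [pow_succ', ← Matrix.mulVec_mulVec, ih]
      rcases lt_trichotomy (i + l) m with h | h | h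
      · have hul : u l = w (i + l) := by simp [hu, h.le]
        have hchain' := hchain (i + l) (le_trans hi1 (Nat.le_add_right i l)) h
        have : N.mulVec (w (i + l)) = w (i + l + 1) := by
          rw [hNdef, Matrix.sub_mulVec, hchain', Matrix.smul_mulVec,
            Matrix.one_mulVec]
          abel
        rw [hul, this]
        have : i + (l + 1) ≤ m := by omega
        simp [hu, this, Nat.add_assoc]
      · have hul : u l = w m := by simp [hu, h.le, h]
        have : N.mulVec (w m) = 0 := by
          rw [hNdef, Matrix.sub_mulVec, hlast, Matrix.smul_mulVec,
            Matrix.one_mulVec]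
          abel
        rw [hul, this]
        have hgt : ¬ i + (l + 1) ≤ m := by omega
        simp [hu, hgt]
      · have hul : u l = 0 := by simp [hu, Nat.not_le.mpr h]
        have hgt : ¬ i + (l + 1) ≤ m := by omega
        rw [hul, Matrix.mulVec_zero]
        simp [hu, hgt]
  -- key evolution identity for the adjoint
  have key : (NormedSpace.exp ((t : ℂ) • A.conjTranspose)).mulVec (w i)
      = Complex.exp ((t : ℂ) * μ) •
          ∑ l ∈ Finset.range (m - i + 1),
            (((t : ℂ)) ^ l * ((l.factorial : ℂ))⁻¹) • w (i + l) := by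
    have hsplit : (t : ℂ) • A.conjTranspose
        = ((t : ℂ) * μ) • (1 : Matrix (Fin n) (Fin n) ℂ) + (t : ℂ) • N := by
      rw [hNdef]
      rw [smul_sub, smul_smul]
      abel
    rw [hsplit, exp_smul_one_add, Matrix.smul_mulVec, exp_mulVec]
    congr 1
    have hterm : ∀ k : ℕ, ((k.factorial : ℂ))⁻¹ • (((t : ℂ) • N) ^ k).mulVec (w i)
        = (((t : ℂ)) ^ k * ((k.factorial : ℂ))⁻¹) • u k := by
      intro k
      rw [smul_pow, Matrix.smul_mulVec, hpow, smul_smul, mul_comm]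
    rw [tsum_congr hterm]
    rw [tsum_eq_sum (s := Finset.range (m - i + 1)) (by
      intro k hk
      have : ¬ i + k ≤ m := by
        simp only [Finset.mem_range] at hk; omega
      simp [hu, this])]
    apply Finset.sum_congr rfl
    intro k hk
    have : i + k ≤ m := by
      simp only [Finset.mem_range] at hk; omega
    simp [hu, this]
  -- assemble
  rw [sum_mulVec_conj]
  have hCT : ((NormedSpace.exp ((t : ℂ) • A))).conjTranspose
      = NormedSpace.exp ((t : ℂ) • A.conjTranspose) := by
    rw [← Matrix.exp_conjTranspose, Matrix.conjTranspose_smul]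
    congr 1
    simp [Complex.star_def, Complex.conj_ofReal]
  rw [hCT, key]
  have hexp : (starRingEnd ℂ) (Complex.exp ((t : ℂ) * μ)) = Complex.exp (lam * t) := by
    rw [← Complex.exp_conj]
    congr 1
    rw [hμ]
    simp [mul_comm, Complex.conj_ofReal]
  simp only [Pi.smul_apply, Finset.sum_apply, smul_eq_mul, map_mul, map_sum, map_pow,
    map_inv₀, Complex.conj_ofReal, Complex.conj_natCast, hexp]
  simp only [Finset.mul_sum]
  rw [Finset.sum_comm]
  apply Finset.sum_congr rfl
  intro l _
  apply Finset.sum_congr rfl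
  intro k _
  rw [div_eq_mul_inv]
  ring
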